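/- arXiv:2508.05831 — 2 statements merged into one kernel-verified Lean document; each statement's English description precedes it below -/
import Mathlib

section
/- Let X : Ω → ℝⁿ and ε : Ω → ℝᵐ be square-integrable random vectors on a probability space, with X and ε independent and E[ε] = 0. Let F ∈ ℝ^{m×n}, set Y = F X + ε, and let L_X be a matrix with E[X Xᵀ] = L_X L_Xᵀ. Then the matrix Â = F L_X L_X† attains the global minimum of the Bayes risk: for every A ∈ ℝ^{m×n}, E‖Â X − Y‖₂² ≤ E‖A X − Y‖₂². -/
open Matrix MeasureTheory ProbabilityTheory

/-- Second (cross-)moment matrix `E[X Yᵀ]` of two random vectors. -/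
noncomputable def secondMoment {Ω : Type} [MeasurableSpace Ω] (μ : Measure Ω)
    {n m : ℕ} (X : Ω → Fin n → ℝ) (Y : Ω → Fin m → ℝ) : Matrix (Fin n) (Fin m) ℝ :=
  Matrix.of fun i j => ∫ ω, X ω i * Y ω j ∂μ

/-- `Ad` is the Moore–Penrose pseudoinverse of `A` (the four Penrose conditions). -/
def IsMoorePenrose {m n : ℕ} (A : Matrix (Fin m) (Fin n) ℝ)
    (Ad : Matrix (Fin n) (Fin m) ℝ) : Prop :=
  A * Ad * A = A ∧ Ad * A * Ad = Ad ∧ (A * Ad)ᵀ = A * Ad ∧ (Ad * A)ᵀ = Ad * A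

lemma memL2_integrable_mul {Ω : Type} [MeasurableSpace Ω] {μ : Measure Ω} {f g : Ω → ℝ}
    (hf : MemLp f 2 μ) (hg : MemLp g 2 μ) : Integrable (fun ω => f ω * g ω) μ := by
  have h1 : Integrable (fun ω => (f ω + g ω) ^ 2) μ := (hf.add hg).integrable_sq
  have h2 := hf.integrable_sq
  have h3 := hg.integrable_sq
  have he : (fun ω => f ω * g ω)
      = fun ω => ((f ω + g ω) ^ 2 - f ω ^ 2 - g ω ^ 2) / 2 := by
    funext ω; ring
  rw [he]
  exact ((h1.sub h2).sub h3).div_const 2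

/-- Risk decomposition: `E‖B X − ε‖² = tr(B Γ_X Bᵀ) + E‖ε‖²`. -/
lemma risk_decomp {Ω : Type} [MeasurableSpace Ω]
    (μ : Measure Ω) [IsProbabilityMeasure μ] {n m : ℕ}
    (X : Ω → Fin n → ℝ) (ε : Ω → Fin m → ℝ)
    (hX : MemLp X 2 μ) (hε : MemLp ε 2 μ)
    (hindep : ProbabilityTheory.IndepFun X ε μ)
    (hmean : (∫ ω, ε ω ∂μ) = 0)
    (B : Matrix (Fin m) (Fin n) ℝ) :
    ∫ ω, ∑ i, (B *ᵥ X ω - ε ω) i ^ 2 ∂μ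
      = (∑ i, ∑ j, ∑ l, B i j * B i l * secondMoment μ X X j l)
        + ∫ ω, ∑ i, ε ω i ^ 2 ∂μ := by
  classical
  have hXj : ∀ j, MemLp (fun ω => X ω j) 2 μ := fun j =>
    (ContinuousLinearMap.proj (R := ℝ) (φ := fun _ : Fin n => ℝ) j).comp_memLp' hX
  have hεi : ∀ i, MemLp (fun ω => ε ω i) 2 μ := fun i =>
    (ContinuousLinearMap.proj (R := ℝ) (φ := fun _ : Fin m => ℝ) i).comp_memLp' hε
  have hu : ∀ i, MemLp (fun ω => (B *ᵥ X ω) i) 2 μ := by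
    intro i
    have : (fun ω => (B *ᵥ X ω) i) = fun ω => ∑ j, B i j * X ω j := by
      funext ω; simp [Matrix.mulVec, dotProduct]
    rw [this]
    have h := memLp_finset_sum' (μ := μ) Finset.univ
      (f := fun j => fun ω => B i j * X ω j) (fun j _ => (hXj j).const_mul (B i j))
    have he2 : (fun ω => ∑ j : Fin n, B i j * X ω j)
        = ∑ j : Fin n, fun ω => B i j * X ω j := by
      funext ω; simp
    rw [he2]; exact h
  -- integrability of each summand
  have hint : ∀ i : Fin m, Integrable (fun ω => (B *ᵥ X ω - ε ω) i ^ 2) μ := by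
    intro i
    have h := ((hu i).sub (hεi i)).integrable_sq
    exact h.congr (Filter.Eventually.of_forall fun ω => by simp)
  have hintε : ∀ i : Fin m, Integrable (fun ω => ε ω i ^ 2) μ := fun i => (hεi i).integrable_sq
  have hintu : ∀ i : Fin m, Integrable (fun ω => (B *ᵥ X ω) i ^ 2) μ := fun i =>
    (hu i).integrable_sq
  have hintuv : ∀ i : Fin m, Integrable (fun ω => (B *ᵥ X ω) i * ε ω i) μ := fun i =>
    memL2_integrable_mul (hu i) (hεi i)
  have hintXX : ∀ j l, Integrable (fun ω => X ω j * X ω l) μ := fun j l =>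
    memL2_integrable_mul (hXj j) (hXj l)
  -- mean of ε components is zero
  have hmeani : ∀ i, (∫ ω, ε ω i ∂μ) = 0 := by
    intro i
    have hεint : Integrable ε μ := hε.integrable one_le_two
    have := (ContinuousLinearMap.proj (R := ℝ) (φ := fun _ : Fin m => ℝ) i).integral_comp_comm
      hεint
    simpa [hmean] using this
  -- cross term vanishes
  have hcross : ∀ i : Fin m, (∫ ω, (B *ᵥ X ω) i * ε ω i ∂μ) = 0 := by
    intro i
    have hφ : Measurable (fun x : Fin n → ℝ => (B *ᵥ x) i) := by
      have : (fun x : Fin n → ℝ => (B *ᵥ x) i) = fun x => ∑ j, B i j * x j := by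
        funext x; simp [Matrix.mulVec, dotProduct]
      rw [this]
      exact Finset.measurable_sum _ fun j _ => (measurable_pi_apply j).const_mul _
    have hψ : Measurable (fun x : Fin m → ℝ => x i) := measurable_pi_apply i
    have hind2 : IndepFun (fun ω => (B *ᵥ X ω) i) (fun ω => ε ω i) μ :=
      hindep.comp hφ hψ
    rw [hind2.integral_fun_mul_eq_mul_integral (hu i).aestronglyMeasurable (hεi i).aestronglyMeasurable,
      hmeani i, mul_zero]
  -- second moment of u
  have husq : ∀ i : Fin m, (∫ ω, (B *ᵥ X ω) i ^ 2 ∂μ)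
      = ∑ j, ∑ l, B i j * B i l * secondMoment μ X X j l := by
    intro i
    have h1 : (fun ω => (B *ᵥ X ω) i ^ 2)
        = fun ω => ∑ j, ∑ l, B i j * B i l * (X ω j * X ω l) := by
      funext ω
      have : (B *ᵥ X ω) i = ∑ j, B i j * X ω j := by simp [Matrix.mulVec, dotProduct]
      rw [this, sq, Finset.sum_mul_sum]
      exact Finset.sum_congr rfl fun j _ => Finset.sum_congr rfl fun l _ => by ring
    rw [h1, integral_finset_sum _ (fun j _ => integrable_finset_sum _
      (fun l _ => ((hintXX j l).const_mul _)))]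
    refine Finset.sum_congr rfl fun j _ => ?_
    rw [integral_finset_sum _ (fun l _ => ((hintXX j l).const_mul _))]
    refine Finset.sum_congr rfl fun l _ => ?_
    rw [integral_const_mul]
    rfl
  -- expand the square and integrate term by term
  have hexp : ∀ i : Fin m, (∫ ω, (B *ᵥ X ω - ε ω) i ^ 2 ∂μ)
      = (∑ j, ∑ l, B i j * B i l * secondMoment μ X X j l) + ∫ ω, ε ω i ^ 2 ∂μ := by
    intro i
    have h1 : (fun ω => (B *ᵥ X ω - ε ω) i ^ 2)
        = fun ω => (B *ᵥ X ω) i ^ 2 - 2 * ((B *ᵥ X ω) i * ε ω i) + ε ω i ^ 2 := by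
      funext ω; simp only [Pi.sub_apply]; ring
    have hI1 : Integrable (fun ω => (B *ᵥ X ω) i ^ 2 - 2 * ((B *ᵥ X ω) i * ε ω i)) μ :=
      (hintu i).sub ((hintuv i).const_mul 2)
    have hI2 : Integrable (fun ω => 2 * ((B *ᵥ X ω) i * ε ω i)) μ := (hintuv i).const_mul 2
    rw [h1, integral_add hI1 (hintε i), integral_sub (hintu i) hI2, integral_const_mul,
      hcross i, mul_zero, sub_zero, husq i]
  rw [integral_finset_sum _ fun i _ => hint i, integral_finset_sum _ fun i _ => hintε i]
  calc (∑ i, ∫ ω, (B *ᵥ X ω - ε ω) i ^ 2 ∂μ)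
      = ∑ i, ((∑ j, ∑ l, B i j * B i l * secondMoment μ X X j l) + ∫ ω, ε ω i ^ 2 ∂μ) :=
        Finset.sum_congr rfl fun i _ => hexp i
    _ = (∑ i, ∑ j, ∑ l, B i j * B i l * secondMoment μ X X j l)
          + ∑ i, ∫ ω, ε ω i ^ 2 ∂μ := Finset.sum_add_distrib

/-- Algebra: `tr(B (L Lᵀ) Bᵀ) = ‖B L‖_F²`. -/
lemma trace_factor {n m k : ℕ} (B : Matrix (Fin m) (Fin n) ℝ)
    (L : Matrix (Fin n) (Fin k) ℝ) :
    (∑ i, ∑ j, ∑ l, B i j * B i l * (L * Lᵀ) j l) = ∑ i, ∑ s, ((B * L) i s) ^ 2 := by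
  refine Finset.sum_congr rfl fun i _ => ?_
  have h1 : ∀ j l : Fin n, B i j * B i l * (L * Lᵀ) j l
      = ∑ s, (B i j * L j s) * (B i l * L l s) := by
    intro j l
    simp only [Matrix.mul_apply, Matrix.transpose_apply, Finset.mul_sum]
    exact Finset.sum_congr rfl fun s _ => by ring
  have h2 : ∀ s : Fin k, ((B * L) i s) ^ 2
      = ∑ j, ∑ l, (B i j * L j s) * (B i l * L l s) := by
    intro s
    simp only [Matrix.mul_apply, sq, Finset.sum_mul_sum]
  simp only [h1, h2]
  calc (∑ j, ∑ l, ∑ s, (B i j * L j s) * (B i l * L l s))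
      = ∑ j, ∑ s, ∑ l, (B i j * L j s) * (B i l * L l s) :=
        Finset.sum_congr rfl fun j _ => Finset.sum_comm
    _ = ∑ s, ∑ j, ∑ l, (B i j * L j s) * (B i l * L l s) := Finset.sum_comm

/-- The projected forward operator `Â = F L_X L_X†` attains the global minimum of the
Bayes risk `E‖A X − Y‖₂²` over all (unconstrained) `A`. -/
theorem forward_projection_optimal {Ω : Type} [MeasurableSpace Ω]
    (μ : Measure Ω) [IsProbabilityMeasure μ] {n m k : ℕ}
    (X : Ω → Fin n → ℝ) (ε : Ω → Fin m → ℝ)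
    (hX : MemLp X 2 μ) (hε : MemLp ε 2 μ)
    (hindep : ProbabilityTheory.IndepFun X ε μ)
    (hmean : (∫ ω, ε ω ∂μ) = 0)
    (F : Matrix (Fin m) (Fin n) ℝ)
    (LX : Matrix (Fin n) (Fin k) ℝ) (hLX : secondMoment μ X X = LX * LXᵀ)
    (LXd : Matrix (Fin k) (Fin n) ℝ) (hLXd : IsMoorePenrose LX LXd) :
    ∀ A : Matrix (Fin m) (Fin n) ℝ,
      ∫ ω, ∑ i, ((F * LX * LXd) *ᵥ X ω - (F *ᵥ X ω + ε ω)) i ^ 2 ∂μ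
        ≤ ∫ ω, ∑ i, (A *ᵥ X ω - (F *ᵥ X ω + ε ω)) i ^ 2 ∂μ := by
  intro A
  -- rewrite both risks via `risk_decomp` with `B = M − F`
  have hrw : ∀ M : Matrix (Fin m) (Fin n) ℝ,
      (∫ ω, ∑ i, (M *ᵥ X ω - (F *ᵥ X ω + ε ω)) i ^ 2 ∂μ)
        = (∑ i, ∑ s, (((M - F) * LX) i s) ^ 2) + ∫ ω, ∑ i, ε ω i ^ 2 ∂μ := by
    intro M
    have h1 : (∫ ω, ∑ i, (M *ᵥ X ω - (F *ᵥ X ω + ε ω)) i ^ 2 ∂μ)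
        = ∫ ω, ∑ i, ((M - F) *ᵥ X ω - ε ω) i ^ 2 ∂μ := by
      refine integral_congr_ae (Filter.Eventually.of_forall fun ω => ?_)
      refine Finset.sum_congr rfl fun i _ => ?_
      simp [Matrix.sub_mulVec, sub_add_eq_sub_sub]
    rw [h1, risk_decomp μ X ε hX hε hindep hmean (M - F), hLX, trace_factor]
  rw [hrw A, hrw (F * LX * LXd)]
  have hzero : (F * LX * LXd - F) * LX = 0 := by
    have h := hLXd.1
    rw [Matrix.sub_mul]
    calc F * LX * LXd * LX - F * LX = F * (LX * LXd * LX) - F * LX := by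
          rw [← Matrix.mul_assoc, ← Matrix.mul_assoc]
      _ = 0 := by rw [h, sub_self]
  rw [hzero]
  simp only [Matrix.zero_apply, ne_eq, OfNat.ofNat_ne_zero, not_false_eq_true, zero_pow,
    Finset.sum_const_zero, zero_add]
  have : (0 : ℝ) ≤ ∑ i, ∑ s, (((A - F) * LX) i s) ^ 2 :=
    Finset.sum_nonneg fun i _ => Finset.sum_nonneg fun s _ => sq_nonneg _
  linarith
end

section
/- Let X : Ω → ℝⁿ and ε : Ω → ℝᵐ be square-integrable random vectors on a probability space, with X and ε independent and E[ε] = 0. Let F ∈ ℝ^{m×n}, let μ_X = E[X], and let K_X be a matrix with Cov(X) = E[(X − μ_X)(X − μ_X)ᵀ] = K_X K_Xᵀ. Let M be a best rank-≤r approximation of F K_X in the Frobenius norm, set Â = M K_X† and b̂ = (F − Â) μ_X. Then rank(Â) ≤ r and for every A ∈ ℝ^{m×n} with rank(A) ≤ r and every b ∈ ℝᵐ, E‖Â X + b̂ − (F X + ε)‖₂² ≤ E‖A X + b − (F X + ε)‖₂². -/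
open Matrix MeasureTheory

/-- Covariance matrix `E[(X − E X)(X − E X)ᵀ]` of a random vector. -/
noncomputable def covMatrix {Ω : Type} [MeasurableSpace Ω] (μ : Measure Ω)
    {n : ℕ} (X : Ω → Fin n → ℝ) : Matrix (Fin n) (Fin n) ℝ :=
  Matrix.of fun i j =>
    ∫ ω, (X ω i - ∫ ω', X ω' i ∂μ) * (X ω j - ∫ ω', X ω' j ∂μ) ∂μ

/-- Frobenius norm of a real matrix. -/
noncomputable def frob {m n : ℕ} (A : Matrix (Fin m) (Fin n) ℝ) : ℝ :=
  Real.sqrt (∑ i, ∑ j, (A i j) ^ 2)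

section Aux

variable {Ω : Type} [MeasurableSpace Ω] {μ : Measure Ω}

private lemma memLp_mul_integrable {f g : Ω → ℝ} (hf : MemLp f 2 μ) (hg : MemLp g 2 μ) :
    Integrable (fun ω => f ω * g ω) μ := by
  have h := (((hf.add hg).integrable_sq.sub hf.integrable_sq).sub hg.integrable_sq).const_mul
    ((1:ℝ)/2)
  convert h using 2 with ω
  simp only [Pi.sub_apply, Pi.add_apply]
  ring

private lemma memLp_eval {n : ℕ} {X : Ω → Fin n → ℝ} (hX : MemLp X 2 μ) (j : Fin n) :
    MemLp (fun ω => X ω j) 2 μ :=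
  (ContinuousLinearMap.proj (R := ℝ) (φ := fun _ : Fin n => ℝ) j).comp_memLp' hX

private lemma integral_eval {n : ℕ} {X : Ω → Fin n → ℝ} (hX : Integrable X μ) (j : Fin n) :
    (∫ ω, X ω ∂μ) j = ∫ ω, X ω j ∂μ := by
  simpa using
    ((ContinuousLinearMap.proj (R := ℝ) (φ := fun _ : Fin n => ℝ) j).integral_comp_comm hX).symm

private lemma scalar_key [IsProbabilityMeasure μ] (u e : Ω → ℝ) (d : ℝ)
    (hu2 : Integrable (fun ω => u ω * u ω) μ)
    (hue : Integrable (fun ω => u ω * e ω) μ)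
    (he2 : Integrable (fun ω => e ω ^ 2) μ)
    (hu1 : Integrable u μ) (he1 : Integrable e μ)
    (hu0 : ∫ ω, u ω ∂μ = 0) (hue0 : ∫ ω, u ω * e ω ∂μ = 0)
    (he0 : ∫ ω, e ω ∂μ = 0) :
    ∫ ω, (u ω + d - e ω) ^ 2 ∂μ
      = (∫ ω, u ω * u ω ∂μ) + d ^ 2 + ∫ ω, e ω ^ 2 ∂μ := by
  have hrw : (fun ω => (u ω + d - e ω) ^ 2)
      = fun ω => (u ω * u ω + e ω ^ 2 + d ^ 2)
        + ((2 * d) * u ω + (-2) * (u ω * e ω) + (-2 * d) * e ω) := by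
    funext ω; ring
  have h12 : Integrable (fun ω => u ω * u ω + e ω ^ 2) μ := hu2.add he2
  have hA : Integrable (fun ω => u ω * u ω + e ω ^ 2 + d ^ 2) μ :=
    h12.add (integrable_const _)
  have hB1 : Integrable (fun ω => (2 * d) * u ω) μ := hu1.const_mul _
  have hB2 : Integrable (fun ω => (-2 : ℝ) * (u ω * e ω)) μ := hue.const_mul _
  have hB3 : Integrable (fun ω => (-2 * d) * e ω) μ := he1.const_mul _
  have hB12 : Integrable (fun ω => (2 * d) * u ω + (-2) * (u ω * e ω)) μ := hB1.add hB2
  have hB : Integrable (fun ω => (2 * d) * u ω + (-2) * (u ω * e ω) + (-2 * d) * e ω) μ :=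
    hB12.add hB3
  rw [hrw, integral_add hA hB]
  have hAval : ∫ ω, (u ω * u ω + e ω ^ 2 + d ^ 2) ∂μ
      = (∫ ω, u ω * u ω ∂μ) + (∫ ω, e ω ^ 2 ∂μ) + d ^ 2 := by
    rw [integral_add h12 (integrable_const _), integral_add hu2 he2, integral_const]
    simp
  have hBval : ∫ ω, ((2 * d) * u ω + (-2) * (u ω * e ω) + (-2 * d) * e ω) ∂μ = 0 := by
    rw [integral_add hB12 hB3, integral_add hB1 hB2, integral_const_mul,
      integral_const_mul, integral_const_mul, hu0, hue0, he0]
    ring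
  rw [hAval, hBval]; ring

private lemma quad_eq {m n k : ℕ} (G : Matrix (Fin m) (Fin n) ℝ) (K : Matrix (Fin n) (Fin k) ℝ) :
    ∑ i, ∑ j, ∑ l, G i j * G i l * (K * Kᵀ) j l = ∑ i, ∑ p, ((G * K) i p) ^ 2 := by
  simp only [Matrix.mul_apply, Matrix.transpose_apply, sq, Finset.sum_mul_sum,
    Finset.mul_sum, Finset.sum_mul]
  refine Finset.sum_congr rfl fun i _ => ?_
  calc ∑ j : Fin n, ∑ l : Fin n, ∑ p : Fin k, G i j * G i l * (K j p * K l p)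
      = ∑ j : Fin n, ∑ p : Fin k, ∑ l : Fin n, G i j * G i l * (K j p * K l p) :=
        Finset.sum_congr rfl fun j _ => Finset.sum_comm
    _ = ∑ p : Fin k, ∑ j : Fin n, ∑ l : Fin n, G i j * G i l * (K j p * K l p) :=
        Finset.sum_comm
    _ = ∑ p : Fin k, ∑ l : Fin n, ∑ j : Fin n, G i j * G i l * (K j p * K l p) :=
        Finset.sum_congr rfl fun p _ => Finset.sum_comm
    _ = ∑ p : Fin k, ∑ l : Fin n, ∑ j : Fin n, (G i j * K j p) * (G i l * K l p) := by
        refine Finset.sum_congr rfl fun p _ => Finset.sum_congr rfl fun l _ =>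
          Finset.sum_congr rfl fun j _ => by ring

private lemma sqsum_trace {m k : ℕ} (A : Matrix (Fin m) (Fin k) ℝ) :
    Matrix.trace (A * Aᵀ) = ∑ i, ∑ p, (A i p) ^ 2 := by
  simp [Matrix.trace, Matrix.mul_apply, Matrix.diag, sq]

private lemma proj_le {m k : ℕ} (N : Matrix (Fin m) (Fin k) ℝ) (P : Matrix (Fin k) (Fin k) ℝ)
    (hP2 : P * P = P) (hPt : Pᵀ = P) :
    ∑ i, ∑ p, ((N * P) i p) ^ 2 ≤ ∑ i, ∑ p, (N i p) ^ 2 := by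
  have e1 : (N - N * P) * (N - N * P)ᵀ = N * Nᵀ - (N * P) * (N * P)ᵀ := by
    rw [Matrix.transpose_sub, Matrix.transpose_mul, hPt]
    rw [Matrix.sub_mul, Matrix.mul_sub, Matrix.mul_sub]
    have h1 : N * P * (P * Nᵀ) = N * P * Nᵀ := by
      rw [← Matrix.mul_assoc, Matrix.mul_assoc N P P, hP2]
    have h2 : N * (P * Nᵀ) = N * P * Nᵀ := by rw [Matrix.mul_assoc]
    rw [h1, h2]
    abel
  have e2 : ∑ i, ∑ p, (N i p) ^ 2 - ∑ i, ∑ p, ((N * P) i p) ^ 2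
      = ∑ i, ∑ p, ((N - N * P) i p) ^ 2 := by
    rw [← sqsum_trace, ← sqsum_trace, ← sqsum_trace, e1, Matrix.trace_sub]
  have e3 : 0 ≤ ∑ i, ∑ p, ((N - N * P) i p) ^ 2 :=
    Finset.sum_nonneg fun i _ => Finset.sum_nonneg fun p _ => sq_nonneg _
  linarith [e2, e3]

end Aux

private lemma key_integral {Ω : Type} [MeasurableSpace Ω] (μ : Measure Ω)
    [IsProbabilityMeasure μ]
    {n m : ℕ} (X : Ω → Fin n → ℝ) (ε : Ω → Fin m → ℝ)
    (hX : MemLp X 2 μ) (hε : MemLp ε 2 μ)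
    (hindep : ProbabilityTheory.IndepFun X ε μ)
    (hmean : (∫ ω, ε ω ∂μ) = 0)
    (G : Matrix (Fin m) (Fin n) ℝ) (c : Fin m → ℝ) :
    ∫ ω, ∑ i, ((G *ᵥ X ω + c - ε ω) i) ^ 2 ∂μ
      = (∑ i, ∑ j, ∑ l, G i j * G i l * covMatrix μ X j l)
        + (∑ i, ((G *ᵥ (∫ ω, X ω ∂μ) + c) i) ^ 2)
        + ∫ ω, ∑ i, (ε ω i) ^ 2 ∂μ := by
  set mX : Fin n → ℝ := fun j => ∫ ω, X ω j ∂μ with hmX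
  set Y : Ω → Fin n → ℝ := fun ω j => X ω j - mX j with hY
  set d : Fin m → ℝ := G *ᵥ mX + c with hd
  have hXj : ∀ j, MemLp (fun ω => X ω j) 2 μ := memLp_eval hX
  have hYj : ∀ j, MemLp (fun ω => Y ω j) 2 μ := fun j => (hXj j).sub (memLp_const (mX j))
  have hεi : ∀ i, MemLp (fun ω => ε ω i) 2 μ := memLp_eval hε
  have hεmean : ∀ i, ∫ ω, ε ω i ∂μ = 0 := by
    intro i
    rw [← integral_eval (hε.integrable one_le_two) i, hmean]
    rfl
  have hY0 : ∀ j, ∫ ω, Y ω j ∂μ = 0 := by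
    intro j
    rw [hY]
    simp only
    rw [integral_sub ((hXj j).integrable one_le_two) (integrable_const _), integral_const]
    simp [hmX]
  have hYε0 : ∀ j i, ∫ ω, Y ω j * ε ω i ∂μ = 0 := by
    intro j i
    have hind : ProbabilityTheory.IndepFun (fun ω => Y ω j) (fun ω => ε ω i) μ :=
      hindep.comp ((measurable_pi_apply j).sub measurable_const) (measurable_pi_apply i)
    have := ProbabilityTheory.IndepFun.integral_mul_eq_mul_integral hind
      ((hYj j).integrable one_le_two).aestronglyMeasurable
      ((hεi i).integrable one_le_two).aestronglyMeasurable
    simp only [Pi.mul_apply] at this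
    rw [this, hY0 j, zero_mul]
  set u : Fin m → Ω → ℝ := fun i ω => ∑ j, G i j * Y ω j with hu
  have hui : ∀ i, MemLp (u i) 2 μ := by
    intro i
    have : MemLp (fun ω => ∑ j, G i j * Y ω j) 2 μ := by
      apply memLp_finset_sum
      intro j _
      exact (hYj j).const_mul (G i j)
    exact this
  have h1 : ∀ ω i, (G *ᵥ X ω + c - ε ω) i = u i ω + d i - ε ω i := by
    intro ω i
    simp only [Pi.add_apply, Pi.sub_apply, hu, hd, Matrix.mulVec, dotProduct, hY]
    simp only [mul_sub, Finset.sum_sub_distrib]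
    ring
  simp only [h1]
  have hint : ∀ i, Integrable (fun ω => (u i ω + d i - ε ω i) ^ 2) μ := by
    intro i
    have hm : MemLp (fun ω => u i ω + d i - ε ω i) 2 μ :=
      ((hui i).add (memLp_const (d i))).sub (hεi i)
    exact hm.integrable_sq
  rw [integral_finset_sum Finset.univ fun i _ => hint i]
  have hcov : ∀ j l, ∫ ω, Y ω j * Y ω l ∂μ = covMatrix μ X j l := fun j l => rfl
  have hterm : ∀ i, ∫ ω, (u i ω + d i - ε ω i) ^ 2 ∂μ
      = (∑ j, ∑ l, G i j * G i l * covMatrix μ X j l) + d i ^ 2 + ∫ ω, (ε ω i) ^ 2 ∂μ := by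
    intro i
    have hu0i : ∫ ω, u i ω ∂μ = 0 := by
      rw [hu]
      simp only
      rw [integral_finset_sum _ fun j _ => ((hYj j).integrable one_le_two).const_mul _]
      simp [integral_const_mul, hY0]
    have huε0i : ∫ ω, u i ω * ε ω i ∂μ = 0 := by
      have hr : (fun ω => u i ω * ε ω i) = fun ω => ∑ j, G i j * (Y ω j * ε ω i) := by
        funext ω
        rw [hu]
        simp only
        rw [Finset.sum_mul]
        exact Finset.sum_congr rfl fun j _ => by ring
      rw [hr, integral_finset_sum _ fun j _ =>
        (memLp_mul_integrable (hYj j) (hεi i)).const_mul _]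
      simp [integral_const_mul, hYε0]
    have huu : ∫ ω, u i ω * u i ω ∂μ
        = ∑ j, ∑ l, G i j * G i l * covMatrix μ X j l := by
      have hr : (fun ω => u i ω * u i ω)
          = fun ω => ∑ j, ∑ l, (G i j * G i l) * (Y ω j * Y ω l) := by
        funext ω
        rw [hu]
        simp only
        rw [Finset.sum_mul_sum]
        exact Finset.sum_congr rfl fun j _ => Finset.sum_congr rfl fun l _ => by ring
      rw [hr, integral_finset_sum _ fun j _ => integrable_finset_sum _ fun l _ =>
        (memLp_mul_integrable (hYj j) (hYj l)).const_mul _]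
      refine Finset.sum_congr rfl fun j _ => ?_
      rw [integral_finset_sum _ fun l _ => (memLp_mul_integrable (hYj j) (hYj l)).const_mul _]
      refine Finset.sum_congr rfl fun l _ => ?_
      rw [integral_const_mul, hcov]
    rw [scalar_key (u i) (fun ω => ε ω i) (d i)
      (memLp_mul_integrable (hui i) (hui i)) (memLp_mul_integrable (hui i) (hεi i))
      (hεi i).integrable_sq ((hui i).integrable one_le_two) ((hεi i).integrable one_le_two)
      hu0i huε0i (hεmean i), huu]
  rw [Finset.sum_congr rfl fun i _ => hterm i]
  have hmXeq : (∫ ω, X ω ∂μ) = mX := funext fun j => integral_eval (hX.integrable one_le_two) j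
  rw [hmXeq, Finset.sum_add_distrib, Finset.sum_add_distrib,
    ← integral_finset_sum _ fun i _ => (hεi i).integrable_sq]

/-- Affine linear forward end-to-end problem: `Â = (F K_X)_r K_X†` together with
`b̂ = (F − Â) μ_X` minimizes `E‖A X + b − (F X + ε)‖₂²` over `rank(A) ≤ r` and `b`. -/
theorem affine_forward_end_to_end_optimal {Ω : Type} [MeasurableSpace Ω]
    (μ : Measure Ω) [IsProbabilityMeasure μ] {n m k r : ℕ}
    (X : Ω → Fin n → ℝ) (ε : Ω → Fin m → ℝ)
    (hX : MemLp X 2 μ) (hε : MemLp ε 2 μ)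
    (hindep : ProbabilityTheory.IndepFun X ε μ)
    (hmean : (∫ ω, ε ω ∂μ) = 0)
    (F : Matrix (Fin m) (Fin n) ℝ)
    (KX : Matrix (Fin n) (Fin k) ℝ) (hKX : covMatrix μ X = KX * KXᵀ)
    (KXd : Matrix (Fin k) (Fin n) ℝ) (hKXd : IsMoorePenrose KX KXd)
    (M : Matrix (Fin m) (Fin k) ℝ)
    (hMrank : M.rank ≤ r)
    (hMbest : ∀ N : Matrix (Fin m) (Fin k) ℝ, N.rank ≤ r →
      frob (F * KX - M) ≤ frob (F * KX - N)) :
    (M * KXd).rank ≤ r ∧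
      ∀ A : Matrix (Fin m) (Fin n) ℝ, A.rank ≤ r → ∀ b : Fin m → ℝ,
        ∫ ω, ∑ i, ((M * KXd) *ᵥ X ω + (F - M * KXd) *ᵥ (∫ ω', X ω' ∂μ)
              - (F *ᵥ X ω + ε ω)) i ^ 2 ∂μ
          ≤ ∫ ω, ∑ i, (A *ᵥ X ω + b - (F *ᵥ X ω + ε ω)) i ^ 2 ∂μ := by
  obtain ⟨p1, p2, p3, p4⟩ := hKXd
  refine ⟨le_trans (Matrix.rank_mul_le_left M KXd) hMrank, ?_⟩
  intro A hA b
  have hL : ∀ ω : Ω, ((M * KXd) *ᵥ X ω + (F - M * KXd) *ᵥ (∫ ω', X ω' ∂μ)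
        - (F *ᵥ X ω + ε ω))
      = ((M * KXd - F) *ᵥ X ω + (F - M * KXd) *ᵥ (∫ ω', X ω' ∂μ) - ε ω) := by
    intro ω; simp only [Matrix.sub_mulVec]; abel
  have hR : ∀ ω : Ω, (A *ᵥ X ω + b - (F *ᵥ X ω + ε ω)) = ((A - F) *ᵥ X ω + b - ε ω) := by
    intro ω; simp only [Matrix.sub_mulVec]; abel
  simp only [hL, hR]
  rw [key_integral μ X ε hX hε hindep hmean (M * KXd - F) _,
    key_integral μ X ε hX hε hindep hmean (A - F) b]
  have hzero : ((M * KXd - F) *ᵥ (∫ ω, X ω ∂μ) + (F - M * KXd) *ᵥ (∫ ω, X ω ∂μ))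
      = (0 : Fin m → ℝ) := by
    rw [← Matrix.add_mulVec]
    simp
  rw [hzero, hKX, quad_eq, quad_eq]
  have hT : 0 ≤ ∑ i, (((A - F) *ᵥ (∫ ω, X ω ∂μ) + b) i) ^ 2 :=
    Finset.sum_nonneg fun i _ => sq_nonneg _
  have hzsum : ∑ i : Fin m, ((0 : Fin m → ℝ) i) ^ 2 = 0 := by simp
  -- quadratic term comparison
  have hGK : (M * KXd - F) * KX = -((F * KX - M) * (KXd * KX)) := by
    have e1 : (F * KX) * (KXd * KX) = F * KX := by
      rw [← Matrix.mul_assoc, Matrix.mul_assoc F KX KXd, Matrix.mul_assoc F (KX * KXd) KX,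
        p1]
    have e2 : M * (KXd * KX) = (M * KXd) * KX := by rw [Matrix.mul_assoc]
    rw [Matrix.sub_mul, Matrix.sub_mul, e1, e2, neg_sub]
  have hP2 : (KXd * KX) * (KXd * KX) = KXd * KX := by
    rw [← Matrix.mul_assoc (KXd * KX) KXd KX, p2]
  have hproj : ∑ i, ∑ p, (((F * KX - M) * (KXd * KX)) i p) ^ 2
      ≤ ∑ i, ∑ p, ((F * KX - M) i p) ^ 2 := proj_le _ _ hP2 p4
  have hneg : ∑ i, ∑ p, (((M * KXd - F) * KX) i p) ^ 2
      = ∑ i, ∑ p, (((F * KX - M) * (KXd * KX)) i p) ^ 2 := by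
    rw [hGK]; simp [Matrix.neg_apply]
  have hbest := hMbest (A * KX) (le_trans (Matrix.rank_mul_le_left A KX) hA)
  have hs : (0:ℝ) ≤ ∑ i, ∑ p, ((F * KX - M) i p) ^ 2 :=
    Finset.sum_nonneg fun i _ => Finset.sum_nonneg fun p _ => sq_nonneg _
  have ht : (0:ℝ) ≤ ∑ i, ∑ p, ((F * KX - A * KX) i p) ^ 2 :=
    Finset.sum_nonneg fun i _ => Finset.sum_nonneg fun p _ => sq_nonneg _
  have hsq : ∑ i, ∑ p, ((F * KX - M) i p) ^ 2 ≤ ∑ i, ∑ p, ((F * KX - A * KX) i p) ^ 2 := by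
    have h := pow_le_pow_left₀ (Real.sqrt_nonneg _) hbest 2
    simp only [frob] at h
    rwa [Real.sq_sqrt hs, Real.sq_sqrt ht] at h
  have hAF : ∑ i, ∑ p, ((F * KX - A * KX) i p) ^ 2 = ∑ i, ∑ p, (((A - F) * KX) i p) ^ 2 := by
    have h' : (A - F) * KX = -(F * KX - A * KX) := by rw [Matrix.sub_mul, neg_sub]
    rw [h']
    refine Finset.sum_congr rfl fun i _ => Finset.sum_congr rfl fun p _ => ?_
    rw [Matrix.neg_apply]
    ring
  rw [hzsum]
  linarith [hproj, hsq, hneg, hAF, hT]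
end
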